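/- Consider the network SIS model ẋ = (−D + B − XB)x with B ≥ 0 irreducible and D positive diagonal. If s(−D + B) ≤ 0, then the only equilibrium in the cube [0,1]ⁿ is x = 0. -/

import Mathlib

open Matrix Filter

attribute [local instance] Matrix.linftyOpNormedAddCommGroup Matrix.linftyOpNormedRing
  Matrix.linftyOpNormedAlgebra

lemma key_spectral {n : ℕ} [Nonempty (Fin n)] (M : Matrix (Fin n) (Fin n) ℝ)
    (hMz : ∀ i j, i ≠ j → 0 ≤ M i j)
    (hs : ∀ μ ∈ spectrum ℂ (M.map Complex.ofReal), μ.re ≤ 0)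
    (x : Fin n → ℝ) (hx0 : ∀ i, 0 < x i) (hx1 : ∀ i, x i ≤ 1)
    (c : ℝ) (hc : 0 < c) (hMx : ∀ i, c * x i ≤ (M *ᵥ x) i) : False := by
  haveI : CompleteSpace (Matrix (Fin n) (Fin n) ℂ) :=
    FiniteDimensional.complete ℂ _
  set Mc := M.map Complex.ofReal with hMc
  set K := ‖Mc‖ with hKdef
  have hK0 : 0 ≤ K := norm_nonneg _
  set t : ℝ := (∑ i, |M i i|) + K ^ 2 / (2 * c) + 1 with ht
  have hsum0 : 0 ≤ ∑ i, |M i i| := Finset.sum_nonneg fun i _ => abs_nonneg _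
  have hKc : 0 ≤ K ^ 2 / (2 * c) := by positivity
  have ht0 : 0 < t := by rw [ht]; linarith
  have htd : ∀ i, 0 ≤ t + M i i := by
    intro i
    have h1 : |M i i| ≤ ∑ k, |M k k| :=
      Finset.single_le_sum (fun k _ => abs_nonneg (M k k)) (Finset.mem_univ i)
    have h2 := neg_abs_le (M i i)
    rw [ht]; linarith
  have hK2 : K ^ 2 < 2 * t * c + c ^ 2 := by
    have h1 : 2 * t * c = 2 * c * (∑ i, |M i i|) + K ^ 2 + 2 * c := by
      rw [ht]; field_simp
    nlinarith [mul_nonneg hc.le hsum0]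
  set N : Matrix (Fin n) (Fin n) ℝ :=
    Matrix.of fun i j => M i j + if i = j then t else 0 with hNdef
  have hN : ∀ i j, 0 ≤ N i j := by
    intro i j
    by_cases h : i = j
    · subst h; simpa [hNdef, add_comm] using htd i
    · simpa [hNdef, h] using hMz i j h
  have hNx : ∀ i, (c + t) * x i ≤ (N *ᵥ x) i := by
    intro i
    have h5 : (N *ᵥ x) i = (M *ᵥ x) i + t * x i := by
      simp only [hNdef, Matrix.mulVec, dotProduct, Matrix.of_apply, add_mul]
      rw [Finset.sum_add_distrib]
      congr 1
      simp [ite_mul]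
    rw [h5]
    have := hMx i
    nlinarith [hx0 i]
  have hmono : ∀ u v : Fin n → ℝ, (∀ j, u j ≤ v j) → ∀ i, (N *ᵥ u) i ≤ (N *ᵥ v) i := by
    intro u v huv i
    simp only [Matrix.mulVec, dotProduct]
    exact Finset.sum_le_sum fun j _ => mul_le_mul_of_nonneg_left (huv j) (hN i j)
  have hpow : ∀ m, ∀ i, (c + t) ^ m * x i ≤ ((N ^ m) *ᵥ x) i := by
    intro m
    induction m with
    | zero => intro i; simp [Matrix.one_mulVec]
    | succ m ih =>
      intro i
      have h1 : (N ^ (m + 1)) *ᵥ x = N *ᵥ ((N ^ m) *ᵥ x) := by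
        rw [pow_succ', ← Matrix.mulVec_mulVec]
      rw [h1]
      have h2 : (N *ᵥ ((c + t) ^ m • x)) i ≤ (N *ᵥ ((N ^ m) *ᵥ x)) i :=
        hmono _ _ (fun j => by simpa using ih j) i
      have h3 : (N *ᵥ ((c + t) ^ m • x)) i = (c + t) ^ m * (N *ᵥ x) i := by
        rw [Matrix.mulVec_smul]; rfl
      have h5 : (c + t) ^ m * ((c + t) * x i) ≤ (c + t) ^ m * ((N *ᵥ x) i) :=
        mul_le_mul_of_nonneg_left (hNx i) (pow_nonneg (by linarith) m)
      rw [h3] at h2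
      calc (c + t) ^ (m + 1) * x i = (c + t) ^ m * ((c + t) * x i) := by ring
        _ ≤ (c + t) ^ m * ((N *ᵥ x) i) := h5
        _ ≤ _ := h2
  -- complex side
  set Nc := N.map Complex.ofReal with hNc
  have hNceq : Nc = algebraMap ℂ (Matrix (Fin n) (Fin n) ℂ) (t : ℂ) + Mc := by
    ext i j
    simp only [hNc, hNdef, Matrix.map_apply, Matrix.of_apply, Matrix.add_apply,
      Matrix.algebraMap_eq_diagonal, Matrix.diagonal_apply, Pi.algebraMap_apply,
      Algebra.algebraMap_self_apply, hMc]
    split_ifs with h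
    · push_cast; ring
    · push_cast; ring
  have hspec : ∀ μ' ∈ spectrum ℂ Nc, ‖μ'‖ < c + t := by
    intro μ' hμ'
    rw [hNceq, ← spectrum.singleton_add_eq] at hμ'
    obtain ⟨a, ha, μ, hμ, rfl⟩ := Set.mem_add.mp hμ'
    rw [Set.mem_singleton_iff] at ha
    subst ha
    have hre : μ.re ≤ 0 := hs μ hμ
    have hnorm : ‖μ‖ ≤ K := spectrum.norm_le_norm_of_mem hμ
    have hnsq : ‖μ‖ ^ 2 = μ.re ^ 2 + μ.im ^ 2 := by
      rw [Complex.sq_norm, Complex.normSq_apply]; ring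
    have h2 : ‖(t : ℂ) + μ‖ ^ 2 = (t + μ.re) ^ 2 + μ.im ^ 2 := by
      rw [Complex.sq_norm, Complex.normSq_apply]
      simp only [Complex.add_re, Complex.add_im, Complex.ofReal_re, Complex.ofReal_im]
      ring
    have h3 : ‖(t : ℂ) + μ‖ ^ 2 < (c + t) ^ 2 := by nlinarith [norm_nonneg μ]
    have h4 : 0 ≤ ‖(t : ℂ) + μ‖ := norm_nonneg _
    nlinarith
  have hct0 : 0 < c + t := by linarith
  set r₀ : NNReal := (c + t).toNNReal with hr₀
  have hr₀' : (r₀ : ℝ) = c + t := Real.coe_toNNReal _ hct0.le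
  have hρ : spectralRadius ℂ Nc < (r₀ : ENNReal) := by
    apply spectrum.spectralRadius_lt_of_forall_lt
    intro z hz
    rw [← NNReal.coe_lt_coe, coe_nnnorm, hr₀']
    exact hspec z hz
  obtain ⟨r', hr1, hr2⟩ := ENNReal.lt_iff_exists_nnreal_btwn.mp hρ
  have hr2' : (r' : ℝ) < c + t := by
    rw [← hr₀']
    exact_mod_cast hr2
  have hT := spectrum.pow_nnnorm_pow_one_div_tendsto_nhds_spectralRadius Nc
  have hev : ∀ᶠ m : ℕ in atTop, (‖Nc ^ m‖₊ : ENNReal) ^ (1 / (m : ℝ)) < (r' : ENNReal) :=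
    hT.eventually_lt_const hr1
  obtain ⟨i0⟩ := (inferInstance : Nonempty (Fin n))
  have hgeo : Tendsto (fun m : ℕ => ((r' : ℝ) / (c + t)) ^ m) atTop (nhds 0) :=
    tendsto_pow_atTop_nhds_zero_of_lt_one (by positivity) ((div_lt_one hct0).mpr hr2')
  have hev2 : ∀ᶠ m : ℕ in atTop, ((r' : ℝ) / (c + t)) ^ m < x i0 :=
    hgeo.eventually_lt_const (hx0 i0)
  obtain ⟨m, ⟨hm1, hm2⟩, hm3⟩ := ((hev.and hev2).and (eventually_ge_atTop 1)).exists
  have hmne : (m : ℝ) ≠ 0 := Nat.cast_ne_zero.mpr (by omega)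
  have hup : ‖Nc ^ m‖ < (r' : ℝ) ^ m := by
    have h1 : (‖Nc ^ m‖₊ : ENNReal) < (r' : ENNReal) ^ m := by
      have h0 := ENNReal.pow_lt_pow_left (by omega : m ≠ 0) hm1
      calc (‖Nc ^ m‖₊ : ENNReal)
          = ((‖Nc ^ m‖₊ : ENNReal) ^ (1 / (m : ℝ))) ^ (m : ℕ) := by
            rw [← ENNReal.rpow_natCast (_ ^ _) m, ← ENNReal.rpow_mul, one_div,
              inv_mul_cancel₀ hmne, ENNReal.rpow_one]
        _ < (r' : ENNReal) ^ m := h0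
    rw [← ENNReal.coe_pow, ENNReal.coe_lt_coe, ← NNReal.coe_lt_coe] at h1
    simpa [coe_nnnorm] using h1
  have hlow : (c + t) ^ m * x i0 ≤ ‖Nc ^ m‖ := by
    set xc : Fin n → ℂ := fun i => (x i : ℂ) with hxc
    have hmap : Nc ^ m = (N ^ m).map Complex.ofReal := by
      rw [hNc]
      have h : N.map Complex.ofReal = Complex.ofRealHom.mapMatrix N := rfl
      rw [h, ← map_pow]
      rfl
    have hmv : (Nc ^ m) *ᵥ xc = fun i => (((N ^ m) *ᵥ x) i : ℂ) := by
      rw [hmap]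
      ext i
      simp [Matrix.mulVec, dotProduct, Matrix.map_apply, hxc]
    have hxcnorm : ‖xc‖ ≤ 1 := by
      rw [pi_norm_le_iff_of_nonneg zero_le_one]
      intro i
      simp only [hxc, Complex.norm_real]
      rw [Real.norm_eq_abs, abs_of_nonneg (hx0 i).le]
      exact hx1 i
    have h1 : ‖(Nc ^ m) *ᵥ xc‖ ≤ ‖Nc ^ m‖ := by
      calc ‖(Nc ^ m) *ᵥ xc‖ ≤ ‖Nc ^ m‖ * ‖xc‖ := Matrix.linfty_opNorm_mulVec _ _
        _ ≤ ‖Nc ^ m‖ * 1 := mul_le_mul_of_nonneg_left hxcnorm (norm_nonneg _)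
        _ = ‖Nc ^ m‖ := mul_one _
    have h2 : (c + t) ^ m * x i0 ≤ ‖(Nc ^ m) *ᵥ xc‖ := by
      calc (c + t) ^ m * x i0 ≤ ((N ^ m) *ᵥ x) i0 := hpow m i0
        _ ≤ ‖(((N ^ m) *ᵥ x) i0 : ℂ)‖ := by
            rw [Complex.norm_real, Real.norm_eq_abs]
            exact le_abs_self _
        _ ≤ ‖(Nc ^ m) *ᵥ xc‖ := by
            rw [hmv]
            exact norm_le_pi_norm (fun i => ((((N ^ m) *ᵥ x) i : ℝ) : ℂ)) i0
    linarith
  have hfinal : (c + t) ^ m * x i0 < (r' : ℝ) ^ m := lt_of_le_of_lt hlow hup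
  have hp : (0:ℝ) < (c + t) ^ m := by positivity
  have hlast : x i0 < ((r' : ℝ) / (c + t)) ^ m := by
    rw [div_pow, lt_div_iff₀ hp]
    linarith [hfinal]
  linarith


/-- Irreducibility: for every nontrivial partition there is a nonzero cross entry. -/
def IsIrred {n : ℕ} (A : Matrix (Fin n) (Fin n) ℝ) : Prop :=
  ∀ S : Set (Fin n), S.Nonempty → Sᶜ.Nonempty → ∃ i ∈ S, ∃ j ∈ Sᶜ, A i j ≠ 0

/-- If s(−D + B) ≤ 0 (every eigenvalue of −D + B has nonpositive real part), then
the only equilibrium of the network SIS model in the unit cube is x = 0. -/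
theorem SIS_only_healthy_equilibrium {n : ℕ}
    (d : Fin n → ℝ) (hd : ∀ i, 0 < d i)
    (b : Matrix (Fin n) (Fin n) ℝ) (hb : ∀ i j, 0 ≤ b i j) (hirr : IsIrred b)
    (hs : ∀ μ ∈ spectrum ℂ ((-(Matrix.diagonal d) + b).map (Complex.ofReal)),
      μ.re ≤ 0)
    (x : Fin n → ℝ) (hx_cube : ∀ i, x i ∈ Set.Icc (0 : ℝ) 1)
    (heq : ∀ i, -(d i) * x i + (1 - x i) * ∑ j, b i j * x j = 0) :
    x = 0 := by
  by_contra hx0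
  -- basic positivity facts
  have hlt1 : ∀ i, x i < 1 := by
    intro i
    rcases lt_or_eq_of_le (hx_cube i).2 with h | h
    · exact h
    · exfalso
      have := heq i
      rw [h] at this
      simp at this
      exact (hd i).ne' this
  have hpos : ∀ i, 0 < x i := by
    by_contra hcon
    push_neg at hcon
    obtain ⟨i0, hi0⟩ := hcon
    have hi0 : x i0 = 0 := le_antisymm hi0 (hx_cube i0).1
    set S : Set (Fin n) := {i | 0 < x i} with hS
    have hSne : S.Nonempty := by
      obtain ⟨j, hj⟩ : ∃ j, x j ≠ 0 := Function.ne_iff.mp hx0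
      exact ⟨j, lt_of_le_of_ne (hx_cube j).1 (Ne.symm hj)⟩
    have hScne : Sᶜ.Nonempty := ⟨i0, by simp [hS, hi0]⟩
    obtain ⟨i, hi, j, hj, hbij⟩ := hirr Sᶜ hScne (by rwa [compl_compl])
    rw [compl_compl] at hj
    have hxi : x i = 0 := by
      have : ¬ 0 < x i := hi
      exact le_antisymm (not_lt.mp this) (hx_cube i).1
    have hsum : ∑ k, b i k * x k = 0 := by
      have := heq i
      rw [hxi] at this
      simpa using this
    have hterm : b i j * x j = 0 :=
      (Finset.sum_eq_zero_iff_of_nonneg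
        (fun k _ => mul_nonneg (hb i k) (hx_cube k).1)).mp hsum j (Finset.mem_univ j)
    have hxj : 0 < x j := hj
    exact hbij (by
      rcases mul_eq_zero.mp hterm with h | h
      · exact h
      · exact absurd h hxj.ne')
  have hBx : ∀ i, 0 < ∑ j, b i j * x j := by
    intro i
    have h := heq i
    have h1 : (1 - x i) * ∑ j, b i j * x j = d i * x i := by linarith
    have h2 : 0 < d i * x i := mul_pos (hd i) (hpos i)
    nlinarith [hlt1 i, hpos i]
  -- apply the spectral lemma
  obtain ⟨j0, -⟩ : ∃ j, x j ≠ 0 := Function.ne_iff.mp hx0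
  haveI : Nonempty (Fin n) := ⟨j0⟩
  set M : Matrix (Fin n) (Fin n) ℝ := -(Matrix.diagonal d) + b with hM
  set c : ℝ := Finset.univ.inf' Finset.univ_nonempty (fun i => ∑ j, b i j * x j) with hcdef
  have hc : 0 < c := by
    rw [hcdef, Finset.lt_inf'_iff]
    exact fun i _ => hBx i
  have hcle : ∀ i, c ≤ ∑ j, b i j * x j := fun i =>
    Finset.inf'_le _ (Finset.mem_univ i)
  have hMv : ∀ i, (M *ᵥ x) i = -(d i) * x i + ∑ j, b i j * x j := by
    intro i
    simp only [hM, Matrix.mulVec, dotProduct, Matrix.add_apply, Matrix.neg_apply,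
      Matrix.diagonal_apply, add_mul, neg_mul]
    rw [Finset.sum_add_distrib]
    congr 1
    simp [ite_mul]
  refine key_spectral M ?_ hs x hpos (fun i => (hlt1 i).le) c hc ?_
  · intro i j hij
    simp [hM, Matrix.diagonal_apply_ne _ hij, hb i j]
  · intro i
    have h := heq i
    have h1 : (M *ᵥ x) i = x i * ∑ j, b i j * x j := by
      rw [hMv i]; nlinarith [heq i]
    rw [h1]
    calc c * x i = x i * c := by ring
      _ ≤ x i * ∑ j, b i j * x j := mul_le_mul_of_nonneg_left (hcle i) (hpos i).le
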